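/- Let M ≥ 2 be an integer, let T, T^{tr}, α, ζ > 0 be real numbers, and set θ = M(M−1)/T. Then lim_{P→∞} [ ln(1 + P/M) − ln( (1 + P·(1+P^ζ)^{−T^{tr}/(M(M−1))} + α·P^ζ) / (1 + α·P^ζ/(1 + P/M)) ) ] / ln P = max( min( (ζ/θ)·(T^{tr}/T), 1 − ζ ), 0 ). (Lemma 2: the high-SNR multiplexing order of the downlink rate lower bound during full-duplex closed-loop training, when each user's training power is P^ζ.) -/

import Mathlib

open Real Filter

private lemma rpow_tendsto_zero' {e : ℝ} (he : e < 0) :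
    Tendsto (fun P : ℝ => P ^ e) atTop (nhds 0) := by
  have h := tendsto_rpow_neg_atTop (neg_pos.mpr he)
  simpa using h

private lemma aux_log_div (f : ℝ → ℝ) (a c : ℝ) (hc : 0 < c)
    (h : Tendsto (fun P => f P / P ^ a) atTop (nhds c)) :
    Tendsto (fun P => Real.log (f P) / Real.log P) atTop (nhds a) := by
  have h1 : Tendsto (fun P => Real.log (f P / P ^ a)) atTop (nhds (Real.log c)) :=
    (Real.continuousAt_log hc.ne').tendsto.comp h
  have h2 : Tendsto (fun P => Real.log (f P / P ^ a) / Real.log P) atTop (nhds 0) :=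
    h1.div_atTop Real.tendsto_log_atTop
  have h3 := h2.add_const a
  rw [zero_add] at h3
  refine h3.congr' ?_
  have hf : ∀ᶠ P in atTop, 0 < f P := by
    filter_upwards [h.eventually (eventually_gt_nhds hc),
      eventually_gt_atTop (0:ℝ)] with P h1 h2
    have hpa : 0 < P ^ a := Real.rpow_pos_of_pos h2 a
    have := mul_pos h1 hpa
    rwa [div_mul_cancel₀ _ hpa.ne'] at this
  filter_upwards [hf, eventually_gt_atTop (1:ℝ)] with P hfP hP
  have hP0 : 0 < P := lt_trans one_pos hP
  have hlog : Real.log P ≠ 0 := ne_of_gt (Real.log_pos hP)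
  rw [Real.log_div hfP.ne' (Real.rpow_pos_of_pos hP0 a).ne', Real.log_rpow hP0]
  field_simp
  ring

/-- Lemma 2 of the paper: the high-SNR multiplexing order of the downlink rate lower
bound during full-duplex closed-loop training with user training power `P^ζ`. -/
theorem highSNR_rate_during_training_closed
    (M : ℕ) (hM : 2 ≤ M) (T Ttr α ζ : ℝ)
    (hT : 0 < T) (hTtr : 0 < Ttr) (hα : 0 < α) (hζ : 0 < ζ)
    (θ : ℝ) (hθ : θ = (M : ℝ) * ((M : ℝ) - 1) / T) :
    Tendsto
      (fun P : ℝ =>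
        (Real.log (1 + P / (M : ℝ)) -
          Real.log
            ((1 + P * (1 + P ^ ζ) ^ (-(Ttr / ((M : ℝ) * ((M : ℝ) - 1)))) + α * P ^ ζ) /
              (1 + α * P ^ ζ / (1 + P / (M : ℝ))))) / Real.log P)
      atTop
      (nhds (max (min ((ζ / θ) * (Ttr / T)) (1 - ζ)) 0)) := by
  have hM2 : (2:ℝ) ≤ (M:ℝ) := by exact_mod_cast hM
  have hm : 0 < (M:ℝ) * ((M:ℝ) - 1) := by nlinarith
  have hM0 : (0:ℝ) < (M:ℝ) := by linarith
  obtain ⟨β, hβdef⟩ : ∃ b : ℝ, b = Ttr / ((M:ℝ) * ((M:ℝ) - 1)) := ⟨_, rfl⟩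
  have hβ : 0 < β := hβdef ▸ div_pos hTtr hm
  obtain ⟨aN, haNdef⟩ : ∃ a : ℝ, a = max (1 - ζ * β) ζ := ⟨_, rfl⟩
  have haN : 0 < aN := haNdef ▸ lt_of_lt_of_le hζ (le_max_right _ _)
  obtain ⟨aD, haDdef⟩ : ∃ a : ℝ, a = max (ζ - 1) 0 := ⟨_, rfl⟩
  have haD : 0 ≤ aD := haDdef ▸ le_max_right _ _
  -- the inner factor `(1 + P^{-ζ})^{-β} → 1`
  have hg : Tendsto (fun P : ℝ => (1 + P ^ (-ζ)) ^ (-β)) atTop (nhds 1) := by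
    have h0 : Tendsto (fun P : ℝ => 1 + P ^ (-ζ)) atTop (nhds 1) := by
      have := (rpow_tendsto_zero' (neg_neg_iff_pos.mpr hζ : -ζ < 0)).const_add (1:ℝ)
      simpa using this
    simpa using h0.rpow_const (p := -β) (Or.inl one_ne_zero)
  -- `P/(1+P/M) → M`
  have hratio : Tendsto (fun P : ℝ => P / (1 + P / (M:ℝ))) atTop (nhds (M:ℝ)) := by
    have h0 : Tendsto (fun P : ℝ => 1 / P + 1 / (M:ℝ)) atTop (nhds (1 / (M:ℝ))) := by
      have := (tendsto_inv_atTop_zero (𝕜 := ℝ)).add_const (1 / (M:ℝ))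
      simpa [one_div] using this
    have h1 := h0.inv₀ (by positivity)
    have h2 : (1 / (M:ℝ))⁻¹ = (M:ℝ) := by simp
    rw [h2] at h1
    refine h1.congr' ?_
    filter_upwards [eventually_gt_atTop (0:ℝ)] with P hP0
    have hden : (0:ℝ) < 1 + P / (M:ℝ) := by positivity
    field_simp
  -- numerator limit
  have hNeq : (fun P : ℝ => (1 + P * (1 + P ^ ζ) ^ (-β) + α * P ^ ζ) / P ^ aN)
      =ᶠ[atTop] (fun P : ℝ =>
        P ^ (-aN) + P ^ (1 - ζ * β - aN) * (1 + P ^ (-ζ)) ^ (-β) + α * P ^ (ζ - aN)) := by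
    filter_upwards [eventually_gt_atTop (0:ℝ)] with P hP0
    have key : (1:ℝ) + P ^ ζ = P ^ ζ * (1 + P ^ (-ζ)) := by
      rw [mul_add, mul_one, ← Real.rpow_add hP0]
      simp [add_comm]
    have hps : P * (P ^ ζ) ^ (-β) = P ^ (1 - ζ * β) := by
      rw [← Real.rpow_mul hP0.le, show (1:ℝ) - ζ * β = 1 + ζ * (-β) by ring,
        Real.rpow_add hP0, Real.rpow_one]
    have hmid : P * (1 + P ^ ζ) ^ (-β) = P ^ (1 - ζ * β) * (1 + P ^ (-ζ)) ^ (-β) := by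
      rw [key, Real.mul_rpow (le_of_lt (Real.rpow_pos_of_pos hP0 ζ)) (by positivity),
        ← mul_assoc, hps]
    have e1 : P ^ (-aN) = 1 / P ^ aN := by rw [Real.rpow_neg hP0.le, one_div]
    have e2 : P ^ (1 - ζ * β - aN) = P ^ (1 - ζ * β) / P ^ aN := Real.rpow_sub hP0 _ _
    have e3 : P ^ (ζ - aN) = P ^ ζ / P ^ aN := Real.rpow_sub hP0 _ _
    rw [e1, e2, e3, hmid, add_div, add_div, mul_div_assoc α, mul_div_right_comm]
  have hNlim : ∃ c : ℝ, 0 < c ∧ Tendsto (fun P : ℝ =>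
      (1 + P * (1 + P ^ ζ) ^ (-β) + α * P ^ ζ) / P ^ aN) atTop (nhds c) := by
    have t1 : Tendsto (fun P : ℝ => P ^ (-aN)) atTop (nhds 0) :=
      rpow_tendsto_zero' (by linarith)
    rcases lt_trichotomy (1 - ζ * β) ζ with hcmp | hcmp | hcmp
    · refine ⟨α, hα, Tendsto.congr' hNeq.symm ?_⟩
      have haNe : aN = ζ := haNdef.trans (max_eq_right hcmp.le)
      have t2 : Tendsto (fun P : ℝ => P ^ (1 - ζ * β - aN) * (1 + P ^ (-ζ)) ^ (-β))
          atTop (nhds 0) := by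
        simpa using (rpow_tendsto_zero' (by rw [haNe]; linarith : 1 - ζ * β - aN < 0)).mul hg
      have t3 : Tendsto (fun P : ℝ => α * P ^ (ζ - aN)) atTop (nhds α) := by
        have : (fun P : ℝ => α * P ^ (ζ - aN)) = fun _ : ℝ => α := by
          funext P; rw [haNe, sub_self, Real.rpow_zero, mul_one]
        rw [this]; exact tendsto_const_nhds
      simpa using (t1.add t2).add t3
    · refine ⟨1 + α, by linarith, Tendsto.congr' hNeq.symm ?_⟩
      have haNe : aN = ζ := haNdef.trans (max_eq_right hcmp.le)
      have t2 : Tendsto (fun P : ℝ => P ^ (1 - ζ * β - aN) * (1 + P ^ (-ζ)) ^ (-β))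
          atTop (nhds 1) := by
        have he : (fun P : ℝ => P ^ (1 - ζ * β - aN) * (1 + P ^ (-ζ)) ^ (-β))
            = fun P : ℝ => (1 + P ^ (-ζ)) ^ (-β) := by
          funext P; rw [haNe, hcmp, sub_self, Real.rpow_zero, one_mul]
        rw [he]; exact hg
      have t3 : Tendsto (fun P : ℝ => α * P ^ (ζ - aN)) atTop (nhds α) := by
        have : (fun P : ℝ => α * P ^ (ζ - aN)) = fun _ : ℝ => α := by
          funext P; rw [haNe, sub_self, Real.rpow_zero, mul_one]
        rw [this]; exact tendsto_const_nhds
      simpa using (t1.add t2).add t3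
    · refine ⟨1, one_pos, Tendsto.congr' hNeq.symm ?_⟩
      have haNe : aN = 1 - ζ * β := haNdef.trans (max_eq_left hcmp.le)
      have t2 : Tendsto (fun P : ℝ => P ^ (1 - ζ * β - aN) * (1 + P ^ (-ζ)) ^ (-β))
          atTop (nhds 1) := by
        have he : (fun P : ℝ => P ^ (1 - ζ * β - aN) * (1 + P ^ (-ζ)) ^ (-β))
            = fun P : ℝ => (1 + P ^ (-ζ)) ^ (-β) := by
          funext P; rw [haNe, sub_self, Real.rpow_zero, one_mul]
        rw [he]; exact hg
      have t3 : Tendsto (fun P : ℝ => α * P ^ (ζ - aN)) atTop (nhds 0) := by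
        simpa using (rpow_tendsto_zero' (by rw [haNe]; linarith : ζ - aN < 0)).const_mul α
      simpa using (t1.add t2).add t3
  -- denominator limit
  have hDeq : (fun P : ℝ => (1 + α * P ^ ζ / (1 + P / (M:ℝ))) / P ^ aD)
      =ᶠ[atTop] (fun P : ℝ =>
        P ^ (-aD) + α * P ^ (ζ - 1 - aD) * (P / (1 + P / (M:ℝ)))) := by
    filter_upwards [eventually_gt_atTop (0:ℝ)] with P hP0
    have hden : (0:ℝ) < 1 + P / (M:ℝ) := by positivity
    have e1 : P ^ (-aD) = 1 / P ^ aD := by rw [Real.rpow_neg hP0.le, one_div]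
    have e2 : P ^ (ζ - 1 - aD) = P ^ ζ / P / P ^ aD := by
      rw [Real.rpow_sub hP0, Real.rpow_sub hP0, Real.rpow_one]
    rw [e1, e2]
    have hpa : (0:ℝ) < P ^ aD := Real.rpow_pos_of_pos hP0 _
    field_simp
  have hDlim : ∃ c : ℝ, 0 < c ∧ Tendsto (fun P : ℝ =>
      (1 + α * P ^ ζ / (1 + P / (M:ℝ))) / P ^ aD) atTop (nhds c) := by
    rcases lt_trichotomy ζ 1 with hcmp | hcmp | hcmp
    · refine ⟨1, one_pos, Tendsto.congr' hDeq.symm ?_⟩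
      have haDe : aD = 0 := haDdef.trans (max_eq_right (by linarith))
      have t1 : Tendsto (fun P : ℝ => P ^ (-aD)) atTop (nhds 1) := by
        have : (fun P : ℝ => P ^ (-aD)) = fun _ : ℝ => 1 := by
          funext P; rw [haDe, neg_zero, Real.rpow_zero]
        rw [this]; exact tendsto_const_nhds
      have t2 : Tendsto (fun P : ℝ => α * P ^ (ζ - 1 - aD) * (P / (1 + P / (M:ℝ))))
          atTop (nhds 0) := by
        have := ((rpow_tendsto_zero' (by rw [haDe]; linarith : ζ - 1 - aD < 0)).const_mul
          α).mul hratio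
        simpa using this
      simpa using t1.add t2
    · refine ⟨1 + α * (M:ℝ), by positivity, Tendsto.congr' hDeq.symm ?_⟩
      have haDe : aD = 0 := haDdef.trans (max_eq_right (by linarith))
      have t1 : Tendsto (fun P : ℝ => P ^ (-aD)) atTop (nhds 1) := by
        have : (fun P : ℝ => P ^ (-aD)) = fun _ : ℝ => 1 := by
          funext P; rw [haDe, neg_zero, Real.rpow_zero]
        rw [this]; exact tendsto_const_nhds
      have t2 : Tendsto (fun P : ℝ => α * P ^ (ζ - 1 - aD) * (P / (1 + P / (M:ℝ))))
          atTop (nhds (α * (M:ℝ))) := by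
        have he : (fun P : ℝ => α * P ^ (ζ - 1 - aD) * (P / (1 + P / (M:ℝ))))
            = fun P : ℝ => α * (P / (1 + P / (M:ℝ))) := by
          funext P; rw [haDe, hcmp, sub_self, sub_zero, Real.rpow_zero, mul_one]
        rw [he]; exact hratio.const_mul α
      simpa using t1.add t2
    · refine ⟨α * (M:ℝ), by positivity, Tendsto.congr' hDeq.symm ?_⟩
      have haDe : aD = ζ - 1 := haDdef.trans (max_eq_left (by linarith))
      have t1 : Tendsto (fun P : ℝ => P ^ (-aD)) atTop (nhds 0) :=
        rpow_tendsto_zero' (by rw [haDe]; linarith)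
      have t2 : Tendsto (fun P : ℝ => α * P ^ (ζ - 1 - aD) * (P / (1 + P / (M:ℝ))))
          atTop (nhds (α * (M:ℝ))) := by
        have he : (fun P : ℝ => α * P ^ (ζ - 1 - aD) * (P / (1 + P / (M:ℝ))))
            = fun P : ℝ => α * (P / (1 + P / (M:ℝ))) := by
          funext P; rw [haDe, sub_self, Real.rpow_zero, mul_one]
        rw [he]; exact hratio.const_mul α
      simpa using t1.add t2
  -- the three log-limits
  have hA : Tendsto (fun P : ℝ => Real.log (1 + P / (M:ℝ)) / Real.log P) atTop (nhds 1) := by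
    refine aux_log_div _ 1 (1 / (M:ℝ)) (by positivity) ?_
    have h0 : Tendsto (fun P : ℝ => 1 / P + 1 / (M:ℝ)) atTop (nhds (1 / (M:ℝ))) := by
      have := (tendsto_inv_atTop_zero (𝕜 := ℝ)).add_const (1 / (M:ℝ))
      simpa [one_div] using this
    refine h0.congr' ?_
    filter_upwards [eventually_gt_atTop (0:ℝ)] with P hP0
    rw [Real.rpow_one]
    field_simp
  obtain ⟨cN, hcN, hNt⟩ := hNlim
  obtain ⟨cD, hcD, hDt⟩ := hDlim
  have hNlog : Tendsto (fun P : ℝ =>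
      Real.log (1 + P * (1 + P ^ ζ) ^ (-β) + α * P ^ ζ) / Real.log P) atTop (nhds aN) :=
    aux_log_div _ aN cN hcN hNt
  have hDlog : Tendsto (fun P : ℝ =>
      Real.log (1 + α * P ^ ζ / (1 + P / (M:ℝ))) / Real.log P) atTop (nhds aD) :=
    aux_log_div _ aD cD hcD hDt
  have hcomb := (hA.sub hNlog).add hDlog
  -- identify the limit value
  have hζβ : (ζ / θ) * (Ttr / T) = ζ * β := by
    rw [hθ, hβdef]
    field_simp
  have hval : max (min ((ζ / θ) * (Ttr / T)) (1 - ζ)) 0 = 1 - aN + aD := by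
    rw [hζβ]
    rcases le_or_gt ζ 1 with h1 | h1
    · have haDe : aD = 0 := haDdef.trans (max_eq_right (by linarith))
      rcases le_total (ζ * β) (1 - ζ) with h2 | h2
      · have haNe : aN = 1 - ζ * β := haNdef.trans (max_eq_left (by linarith))
        have hpos : 0 ≤ ζ * β := by positivity
        rw [min_eq_left h2, max_eq_left hpos, haNe, haDe]; ring
      · have haNe : aN = ζ := haNdef.trans (max_eq_right (by linarith))
        rw [min_eq_right h2, max_eq_left (by linarith), haNe, haDe]; ring
    · have haDe : aD = ζ - 1 := haDdef.trans (max_eq_left (by linarith))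
      have haNe : aN = ζ := haNdef.trans (max_eq_right (by nlinarith [mul_pos hζ hβ]))
      have hmin : min (ζ * β) (1 - ζ) = 1 - ζ ∨ min (ζ * β) (1 - ζ) = ζ * β :=
        (min_choice _ _).symm.imp (fun h => h) (fun h => h)
      have hle : min (ζ * β) (1 - ζ) ≤ 1 - ζ := min_le_right _ _
      rw [max_eq_right (by linarith), haNe, haDe]; ring
  rw [hval, ← hβdef]
  refine hcomb.congr' ?_
  filter_upwards [eventually_gt_atTop (1:ℝ)] with P hP1
  have hP0 : 0 < P := lt_trans one_pos hP1
  have hlog : Real.log P ≠ 0 := ne_of_gt (Real.log_pos hP1)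
  have hNpos : 0 < 1 + P * (1 + P ^ ζ) ^ (-β) + α * P ^ ζ := by
    have h1 : 0 < P ^ ζ := Real.rpow_pos_of_pos hP0 _
    have h2 : 0 < (1 + P ^ ζ) ^ (-β) := Real.rpow_pos_of_pos (by linarith) _
    have h3 := mul_pos hP0 h2
    have h4 := mul_pos hα h1
    linarith
  have hDpos : 0 < 1 + α * P ^ ζ / (1 + P / (M:ℝ)) := by
    have h1 : 0 < P ^ ζ := Real.rpow_pos_of_pos hP0 _
    have hden : (0:ℝ) < 1 + P / (M:ℝ) := by positivity
    positivity
  rw [Real.log_div hNpos.ne' hDpos.ne', div_sub_div_same, ← add_div]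
  congr 1
  ring
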